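/- Let n > m ≥ 1 and let 𝐙, 𝐘 : [0,T] → T_1^{(n)}(ℝ^d) be two càdlàg paths of finite p-variation (w.r.t. the homogeneous norm ‖1+g‖ := ∑_{k=1}^n |g^k|^{1/k}), both starting at 1, both projecting to the same path 𝐗^{(m)} in T^{(m)}, with n = m+1, and having identical jumps: Δ_t 𝐙 = Δ_t 𝐘 for all t. Then 𝐙 = 𝐘. -/

import Mathlib

open scoped BigOperators
open MeasureTheory

noncomputable section

/-- Truncated (at level `N`) tensor-algebra multiplication, in the model of
`T^{(N)}(ℝ^d)` as real-valued functions on words over the alphabet `Fin d`. -/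
noncomputable def taMul (N : ℕ) {d : ℕ} (x y : List (Fin d) → ℝ) : List (Fin d) → ℝ :=
  fun w => if w.length ≤ N then
    ∑ i ∈ Finset.range (w.length + 1), x (w.take i) * y (w.drop i) else 0

/-- The unit of the tensor algebra. -/
def taOne {d : ℕ} : List (Fin d) → ℝ := fun w => if w = [] then 1 else 0

/-- Powers in the truncated tensor algebra. -/
noncomputable def taPow (N : ℕ) {d : ℕ} (x : List (Fin d) → ℝ) : ℕ → (List (Fin d) → ℝ)
  | 0 => taOne
  | k + 1 => taMul N x (taPow N x k)

/-- Truncated tensor exponential `exp^{(N)}(x) = ∑_{k=0}^N x^{⊗k}/k!`. -/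
noncomputable def taExp (N : ℕ) {d : ℕ} (x : List (Fin d) → ℝ) : List (Fin d) → ℝ :=
  fun w => ∑ k ∈ Finset.range (N + 1), ((k.factorial : ℝ))⁻¹ * taPow N x k w

/-- Truncated tensor logarithm `log^{(N)}(x) = ∑_{k=1}^N (−1)^{k+1}/k (x−1)^{⊗k}`. -/
noncomputable def taLog (N : ℕ) {d : ℕ} (x : List (Fin d) → ℝ) : List (Fin d) → ℝ :=
  fun w => ∑ k ∈ Finset.Icc 1 N,
    ((-1 : ℝ)) ^ (k + 1) / k * taPow N (fun u => x u - taOne u) k w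

/-- Inverse in the group `T₁^{(N)}`: `(1+g)⁻¹ = ∑_k (−g)^{⊗k}`. -/
noncomputable def taInv (N : ℕ) {d : ℕ} (x : List (Fin d) → ℝ) : List (Fin d) → ℝ :=
  fun w => ∑ k ∈ Finset.range (N + 1), ((-1 : ℝ)) ^ k * taPow N (fun u => x u - taOne u) k w

/-- Embedding of `ℝ^d` as 1-tensors. -/
def taInj {d : ℕ} (v : Fin d → ℝ) : List (Fin d) → ℝ
  | [i] => v i
  | _ => 0

/-- Embedding of a matrix as a 2-tensor. -/
def ta2 {d : ℕ} (a : Fin d → Fin d → ℝ) : List (Fin d) → ℝ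
  | [i, j] => a i j
  | _ => 0

/-- Homogeneous norm `‖1+g‖ = ∑_{k=1}^N |g^k|^{1/k}` on the truncated tensor algebra,
equivalent to the Carnot–Carathéodory norm on group-like elements. -/
noncomputable def taHomNorm (N : ℕ) {d : ℕ} (x : List (Fin d) → ℝ) : ℝ :=
  ∑ k ∈ Finset.Icc 1 N, (∑ f : Fin k → Fin d, |x (List.ofFn f)|) ^ ((k : ℝ)⁻¹)

def IsPartition (a b : ℝ) (P : Finset ℝ) : Prop :=
  a ∈ P ∧ b ∈ P ∧ ∀ x ∈ P, x ∈ Set.Icc a b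

noncomputable def nextPt (P : Finset ℝ) (b x : ℝ) : ℝ :=
  WithBot.unbotD b (P.filter (fun y => x < y)).min

def Cadlag (X : ℝ → ℝ) (a b : ℝ) : Prop :=
  (∀ t ∈ Set.Ico a b, Filter.Tendsto X (nhdsWithin t (Set.Ici t)) (nhds (X t))) ∧
  (∀ t ∈ Set.Ioc a b, ∃ L : ℝ, Filter.Tendsto X (nhdsWithin t (Set.Iio t)) (nhds L))

/-- Componentwise left limit of a tensor-algebra valued path. -/
noncomputable def taLeftLim (Z : ℝ → List (Fin d) → ℝ) (t : ℝ) : List (Fin d) → ℝ :=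
  fun w => Function.leftLim (fun s => Z s w) t

namespace AuxMJE

variable {d m : ℕ}

lemma taPow_low (g g' : List (Fin d) → ℝ)
    (h : ∀ u : List (Fin d), u.length ≤ m → g u = g' u) :
    ∀ k, ∀ w : List (Fin d), w.length ≤ m → taPow (m+1) g k w = taPow (m+1) g' k w := by
  intro k
  induction k with
  | zero => intro w _; rfl
  | succ k ih =>
    intro w hw
    simp only [taPow, taMul]
    have hw' : w.length ≤ m + 1 := le_trans hw (Nat.le_succ m)
    rw [if_pos hw', if_pos hw']
    refine Finset.sum_congr rfl fun i hi => ?_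
    have h1 : (w.take i).length ≤ m := by
      rw [List.length_take]; omega
    have h2 : (w.drop i).length ≤ m := by
      rw [List.length_drop]; omega
    rw [h _ h1, ih _ h2]

lemma taPow_nil (g : List (Fin d) → ℝ) (hg : g [] = 0) (k : ℕ) :
    taPow (m+1) g (k+1) ([] : List (Fin d)) = 0 := by
  simp [taPow, taMul, hg]

lemma taPow_one (g : List (Fin d) → ℝ) (w : List (Fin d)) (hw : w.length ≤ m + 1) :
    taPow (m+1) g 1 w = g w := by
  simp only [taPow, taMul, if_pos hw]
  rw [Finset.sum_eq_single w.length]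
  · simp [List.take_length, List.drop_length, taOne]
  · intro i hi hne
    have : w.drop i ≠ [] := by
      intro hcon
      have : (w.drop i).length = w.length - i := List.length_drop
      simp [hcon] at this
      simp at hi
      omega
    simp [taOne, this]
  · intro h; simp at h

lemma taPow_top (g g' : List (Fin d) → ℝ) (hg : g [] = 0) (hg' : g' [] = 0)
    (h : ∀ u : List (Fin d), u.length ≤ m → g u = g' u) (k : ℕ)
    (w : List (Fin d)) (hw : w.length = m + 1) :
    taPow (m+1) g (k+2) w = taPow (m+1) g' (k+2) w := by
  show taMul (m+1) g (taPow (m+1) g (k+1)) w = taMul (m+1) g' (taPow (m+1) g' (k+1)) w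
  simp only [taMul, if_pos (le_of_eq hw)]
  refine Finset.sum_congr rfl fun i hi => ?_
  simp only [Finset.mem_range, hw] at hi
  rcases Nat.eq_zero_or_pos i with h0 | h0
  · subst h0; simp [hg, hg']
  rcases eq_or_lt_of_le (Nat.lt_succ_iff.mp hi) with he | hlt
  · subst he
    have hd : w.drop (m+1) = ([] : List (Fin d)) := by rw [← hw]; exact List.drop_length
    rw [hd, taPow_nil g hg k, taPow_nil g' hg' k, mul_zero, mul_zero]
  · have h1 : (w.take i).length ≤ m := by rw [List.length_take]; omega
    have h2 : (w.drop i).length ≤ m := by rw [List.length_drop]; omega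
    rw [h _ h1, taPow_low g g' h _ _ h2]

lemma taInv_low (x x' : List (Fin d) → ℝ)
    (h : ∀ u : List (Fin d), u.length ≤ m → x u = x' u)
    (u : List (Fin d)) (hu : u.length ≤ m) : taInv (m+1) x u = taInv (m+1) x' u := by
  unfold taInv
  refine Finset.sum_congr rfl fun k _ => ?_
  rw [taPow_low (fun v => x v - taOne v) (fun v => x' v - taOne v)
    (fun v hv => by simp only [h v hv]) k u hu]

lemma taInv_nil (x : List (Fin d) → ℝ) (hx : x [] = 1) :
    taInv (m+1) x ([] : List (Fin d)) = 1 := by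
  unfold taInv
  rw [Finset.sum_eq_single 0]
  · simp [taPow, taOne]
  · intro k hk hne
    obtain ⟨j, rfl⟩ := Nat.exists_eq_succ_of_ne_zero hne
    rw [taPow_nil _ (by simp [hx, taOne]) j]; ring
  · simp

lemma taInv_top (x x' : List (Fin d) → ℝ) (hx : x [] = 1) (hx' : x' [] = 1)
    (h : ∀ u : List (Fin d), u.length ≤ m → x u = x' u)
    (w : List (Fin d)) (hw : w.length = m + 1) :
    taInv (m+1) x w - taInv (m+1) x' w = x' w - x w := by
  unfold taInv
  rw [← Finset.sum_sub_distrib]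
  have hwne : w ≠ [] := by intro hc; rw [hc] at hw; simp at hw
  rw [Finset.sum_eq_single 1]
  · rw [taPow_one _ _ (le_of_eq hw), taPow_one _ _ (le_of_eq hw)]
    simp [taOne, hwne]; ring
  · intro k hk hne
    match k, hne with
    | 0, _ => simp [taPow, taOne, hwne]
    | (j+2), _ =>
      rw [taPow_top (fun v => x v - taOne v) (fun v => x' v - taOne v)
        (by simp [hx, taOne]) (by simp [hx', taOne])
        (fun v hv => by simp only [h v hv]) j w hw]
      ring
  · simp

lemma keyIncrement (x x' y y' : List (Fin d) → ℝ)
    (hx : x [] = 1) (hx' : x' [] = 1) (hy : y [] = 1) (hy' : y' [] = 1)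
    (hxx : ∀ u : List (Fin d), u.length ≤ m → x u = x' u)
    (hyy : ∀ u : List (Fin d), u.length ≤ m → y u = y' u)
    (w : List (Fin d)) (hw : w.length = m + 1) :
    taMul (m+1) (taInv (m+1) x) y w - taMul (m+1) (taInv (m+1) x') y' w
      = (y w - x w) - (y' w - x' w) := by
  have hwne : w ≠ [] := by intro hc; rw [hc] at hw; simp at hw
  simp only [taMul, if_pos (le_of_eq hw)]
  rw [← Finset.sum_sub_distrib]
  have key : ∀ i ∈ Finset.range (w.length + 1),
      taInv (m+1) x (w.take i) * y (w.drop i) - taInv (m+1) x' (w.take i) * y' (w.drop i)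
      = (if i = 0 then y w - y' w else 0) + (if i = w.length then x' w - x w else 0) := by
    intro i hi
    simp only [Finset.mem_range] at hi
    rcases Nat.eq_zero_or_pos i with h0 | h0
    · subst h0
      simp [taInv_nil x hx, taInv_nil x' hx', hw]
    rcases eq_or_lt_of_le (Nat.lt_succ_iff.mp hi) with he | hlt
    · subst he
      rw [List.take_length, List.drop_length, hy, hy',
        if_neg (by omega : ¬ w.length = 0), if_pos rfl, mul_one, mul_one, zero_add]
      exact taInv_top x x' hx hx' hxx w hw
    · have h1 : (w.take i).length ≤ m := by rw [List.length_take]; omega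
      have h2 : (w.drop i).length ≤ m := by rw [List.length_drop]; omega
      rw [taInv_low x x' hxx _ h1, hyy _ h2]
      simp only [if_neg (by omega : ¬ i = 0), if_neg (by omega : ¬ i = w.length)]
      ring
  rw [Finset.sum_congr rfl key, Finset.sum_add_distrib,
    Finset.sum_ite_eq' (Finset.range (w.length + 1)) 0,
    Finset.sum_ite_eq' (Finset.range (w.length + 1)) w.length,
    if_pos (by simp), if_pos (by simp)]
  ring

lemma homNorm_nonneg (x : List (Fin d) → ℝ) : 0 ≤ taHomNorm (m+1) x :=
  Finset.sum_nonneg fun _ _ => Real.rpow_nonneg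
    (Finset.sum_nonneg fun _ _ => abs_nonneg _) _

lemma abs_le_homNorm_pow (x : List (Fin d) → ℝ) (w : List (Fin d)) (hw : w.length = m + 1) :
    |x w| ≤ taHomNorm (m+1) x ^ ((m : ℝ) + 1) := by
  set S : ℝ := ∑ f : Fin (m+1) → Fin d, |x (List.ofFn f)| with hS
  have hS0 : 0 ≤ S := Finset.sum_nonneg fun f _ => abs_nonneg _
  have h1 : |x w| ≤ S := by
    have hf : List.ofFn (fun i : Fin (m+1) => w.get (Fin.cast hw.symm i)) = w := by
      apply List.ext_getElem
      · simp [hw]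
      · intro n h1 h2
        rw [List.getElem_ofFn]
        simp [List.get_eq_getElem]
    calc |x w| = |x (List.ofFn (fun i : Fin (m+1) => w.get (Fin.cast hw.symm i)))| := by
          rw [hf]
      _ ≤ S := Finset.single_le_sum (f := fun f : Fin (m+1) → Fin d => |x (List.ofFn f)|)
          (fun f _ => abs_nonneg _) (Finset.mem_univ _)
  have h2 : S ^ (((m+1 : ℕ) : ℝ))⁻¹ ≤ taHomNorm (m+1) x := by
    have hmem : m + 1 ∈ Finset.Icc 1 (m+1) := by simp
    exact Finset.single_le_sum
      (f := fun k => (∑ f : Fin k → Fin d, |x (List.ofFn f)|) ^ ((k : ℝ)⁻¹))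
      (fun k _ => Real.rpow_nonneg (Finset.sum_nonneg fun f _ => abs_nonneg _) _) hmem
  have hcast : ((m+1 : ℕ) : ℝ) = (m : ℝ) + 1 := by push_cast; ring
  rw [hcast] at h2
  have hne : ((m : ℝ) + 1) ≠ 0 := by positivity
  calc |x w| ≤ S := h1
    _ = (S ^ (((m:ℝ)+1))⁻¹) ^ ((m:ℝ)+1) := by
        rw [← Real.rpow_mul hS0, inv_mul_cancel₀ hne, Real.rpow_one]
    _ ≤ taHomNorm (m+1) x ^ ((m:ℝ)+1) :=
        Real.rpow_le_rpow (Real.rpow_nonneg hS0 _) h2 (by positivity)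

lemma umono (u : ℕ → ℝ) (K : ℕ) (hu : ∀ i, i < K → u i < u (i+1)) :
    ∀ j j', j < j' → j' ≤ K → u j < u j' := by
  intro j j' hjj hj'
  induction j' with
  | zero => omega
  | succ n ih =>
    rcases Nat.lt_succ_iff_lt_or_eq.mp hjj with h | h
    · exact lt_trans (ih h (by omega)) (hu n (by omega))
    · subst h; exact hu j (by omega)

lemma umono' (u : ℕ → ℝ) (K : ℕ) (hu : ∀ i, i < K → u i < u (i+1)) :
    ∀ j j', j ≤ j' → j' ≤ K → u j ≤ u j' := by
  intro j j' hjj hj'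
  rcases eq_or_lt_of_le hjj with h | h
  · subst h; rfl
  · exact le_of_lt (umono u K hu j j' h hj')

lemma isPartition_image (u : ℕ → ℝ) (K : ℕ) (hu : ∀ i, i < K → u i < u (i+1)) :
    IsPartition (u 0) (u K) ((Finset.range (K+1)).image u) := by
  refine ⟨Finset.mem_image_of_mem u (by simp), Finset.mem_image_of_mem u (by simp), ?_⟩
  intro x hx
  obtain ⟨j, hj, rfl⟩ := Finset.mem_image.mp hx
  simp only [Finset.mem_range] at hj
  exact ⟨umono' u K hu 0 j (by omega) (by omega), umono' u K hu j K (by omega) le_rfl⟩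

lemma nextPt_image (u : ℕ → ℝ) (K : ℕ) (hu : ∀ i, i < K → u i < u (i+1))
    (i : ℕ) (hi : i < K) :
    nextPt ((Finset.range (K+1)).image u) (u K) (u i) = u (i+1) := by
  set Q := ((Finset.range (K+1)).image u).filter (fun y => u i < y) with hQ
  have hmem : u (i+1) ∈ Q := by
    rw [hQ, Finset.mem_filter]
    exact ⟨Finset.mem_image_of_mem u (by simp; omega), hu i hi⟩
  have hne : Q.Nonempty := ⟨_, hmem⟩
  have hL : ∀ y ∈ Q, u (i+1) ≤ y := by
    intro y hy
    rw [hQ, Finset.mem_filter] at hy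
    obtain ⟨hy1, hlt⟩ := hy
    obtain ⟨j, hj, rfl⟩ := Finset.mem_image.mp hy1
    simp only [Finset.mem_range] at hj
    have hij : i < j := by
      by_contra hcon
      push_neg at hcon
      exact absurd (umono' u K hu j i hcon (by omega)) (not_le.mpr hlt)
    exact umono' u K hu (i+1) j (by omega) (by omega)
  have hmin' : Q.min' hne = u (i+1) :=
    le_antisymm (Finset.min'_le Q _ hmem) (Finset.le_min' Q hne _ hL)
  rw [nextPt, ← hQ, ← Finset.coe_min' hne, hmin']; rfl

lemma erase_image (u : ℕ → ℝ) (K : ℕ) (hu : ∀ i, i < K → u i < u (i+1)) :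
    (((Finset.range (K+1)).image u)).erase (u K) = (Finset.range K).image u := by
  ext x
  simp only [Finset.mem_erase, Finset.mem_image, Finset.mem_range]
  constructor
  · rintro ⟨hne, j, hj, rfl⟩
    refine ⟨j, ?_, rfl⟩
    rcases Nat.lt_succ_iff_lt_or_eq.mp hj with h | h
    · exact h
    · subst h; exact absurd rfl hne
  · rintro ⟨j, hj, rfl⟩
    exact ⟨ne_of_lt (umono u K hu j K hj le_rfl), j, by omega, rfl⟩

lemma sum_partition (u : ℕ → ℝ) (K : ℕ) (hu : ∀ i, i < K → u i < u (i+1))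
    (F : ℝ → ℝ → ℝ) :
    ∑ x ∈ (((Finset.range (K+1)).image u)).erase (u K),
      F x (nextPt ((Finset.range (K+1)).image u) (u K) x)
    = ∑ i ∈ Finset.range K, F (u i) (u (i+1)) := by
  rw [erase_image u K hu, Finset.sum_image]
  · refine Finset.sum_congr rfl fun i hi => ?_
    rw [nextPt_image u K hu i (Finset.mem_range.mp hi)]
  · intro a ha b hb hab
    simp only [Finset.mem_coe, Finset.mem_range] at ha hb
    by_contra hne
    rcases Nat.lt_or_ge a b with h | h
    · exact absurd hab (ne_of_lt (umono u K hu a b h (by omega)))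
    · have : b < a := by omega
      exact absurd hab.symm (ne_of_lt (umono u K hu b a this (by omega)))

lemma rpow_subadd {a b q : ℝ} (ha : 0 ≤ a) (hb : 0 ≤ b) (hq0 : 0 < q) (hq1 : q ≤ 1) :
    (a + b) ^ q ≤ a ^ q + b ^ q := by
  have h1 : (1:ℝ) ≤ 1/q := by rw [le_div_iff₀ hq0]; linarith
  have h := NNReal.rpow_add_rpow_le_add (a.toNNReal ^ q) (b.toNNReal ^ q) h1
  rw [← NNReal.rpow_mul, ← NNReal.rpow_mul, mul_one_div, div_self hq0.ne',
    NNReal.rpow_one, NNReal.rpow_one, one_div_one_div] at h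
  have h2 := NNReal.coe_le_coe.mpr h
  push_cast at h2
  rwa [Real.coe_toNNReal a ha, Real.coe_toNNReal b hb] at h2

end AuxMJE

set_option maxHeartbeats 1000000 in
/-- Let `n = m+1` and let `𝐙, 𝐘 : [0,T] → T₁^{(n)}(ℝ^d)` be càdlàg paths of
finite `p`-variation w.r.t. the homogeneous norm `‖1+g‖ = ∑_k |g^k|^{1/k}`, starting at `1`,
projecting to the same path in `T^{(m)}`, and with identical jumps `Δ_t 𝐙 = Δ_t 𝐘`.
Then `𝐙 = 𝐘`. -/
theorem minimal_jump_extension_unique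
    {d m : ℕ} (hm : 1 ≤ m) (T p : ℝ) (hT : 0 < T)
    (hp1 : (m : ℝ) ≤ p) (hp2 : p < (m : ℝ) + 1)
    (Z Y : ℝ → List (Fin d) → ℝ)
    (hZ1 : ∀ t : ℝ, Z t [] = 1) (hY1 : ∀ t : ℝ, Y t [] = 1)
    (hZ0 : Z 0 = taOne) (hY0 : Y 0 = taOne)
    (hZc : ∀ w : List (Fin d), Cadlag (fun t => Z t w) 0 T)
    (hYc : ∀ w : List (Fin d), Cadlag (fun t => Y t w) 0 T)
    (hZv : ∃ M : ℝ, ∀ P : Finset ℝ, IsPartition 0 T P →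
      ∑ x ∈ P.erase T,
        taHomNorm (m + 1) (taMul (m + 1) (taInv (m + 1) (Z x)) (Z (nextPt P T x))) ^ p ≤ M)
    (hYv : ∃ M : ℝ, ∀ P : Finset ℝ, IsPartition 0 T P →
      ∑ x ∈ P.erase T,
        taHomNorm (m + 1) (taMul (m + 1) (taInv (m + 1) (Y x)) (Y (nextPt P T x))) ^ p ≤ M)
    (hproj : ∀ t : ℝ, ∀ w : List (Fin d), w.length ≤ m → Z t w = Y t w)
    (hjump : ∀ t : ℝ, 0 < t → t ≤ T →
      taMul (m + 1) (taInv (m + 1) (taLeftLim Z t)) (Z t) =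
      taMul (m + 1) (taInv (m + 1) (taLeftLim Y t)) (Y t)) :
    ∀ t ∈ Set.Icc (0:ℝ) T, ∀ w : List (Fin d), w.length ≤ m + 1 → Z t w = Y t w := by
  intro t0 ht0 w hw
  by_cases hwm : w.length ≤ m
  · exact hproj t0 w hwm
  have hwlen : w.length = m + 1 := by omega
  set D : ℝ → ℝ := fun t => Z t w - Y t w with hD
  have hD0 : D 0 = 0 := by simp [hD, hZ0, hY0]
  suffices hDt : D t0 = 0 by
    have := sub_eq_zero.mp hDt
    exact this
  rcases eq_or_lt_of_le ht0.1 with h0 | h0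
  · rw [← h0]; exact hD0
  -- left-continuity of D on (0, T]
  have hleft : ∀ t ∈ Set.Ioc (0:ℝ) T,
      Filter.Tendsto D (nhdsWithin t (Set.Iio t)) (nhds (D t)) := by
    intro t ht
    obtain ⟨LZ, hLZ⟩ := (hZc w).2 t ht
    obtain ⟨LY, hLY⟩ := (hYc w).2 t ht
    have hne : (nhdsWithin t (Set.Iio t)) ≠ ⊥ := (nhdsLT_neBot t).ne
    have hZl : taLeftLim Z t w = LZ := leftLim_eq_of_tendsto hLZ
    have hYl : taLeftLim Y t w = LY := leftLim_eq_of_tendsto hLY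
    have h1Z : taLeftLim Z t [] = 1 := by
      show Function.leftLim (fun s => Z s []) t = 1
      have he : (fun s => Z s ([] : List (Fin d))) = fun _ => (1:ℝ) := funext hZ1
      rw [he]
      exact leftLim_eq_of_tendsto tendsto_const_nhds
    have h1Y : taLeftLim Y t [] = 1 := by
      show Function.leftLim (fun s => Y s []) t = 1
      have he : (fun s => Y s ([] : List (Fin d))) = fun _ => (1:ℝ) := funext hY1
      rw [he]
      exact leftLim_eq_of_tendsto tendsto_const_nhds
    have hlow : ∀ u : List (Fin d), u.length ≤ m → taLeftLim Z t u = taLeftLim Y t u := by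
      intro u hu
      show Function.leftLim (fun s => Z s u) t = Function.leftLim (fun s => Y s u) t
      have he : (fun s => Z s u) = (fun s => Y s u) := funext fun s => hproj s u hu
      rw [he]
    have hkey := AuxMJE.keyIncrement (m := m) (taLeftLim Z t) (taLeftLim Y t) (Z t) (Y t)
      h1Z h1Y (hZ1 t) (hY1 t) hlow (fun u hu => hproj t u hu) w hwlen
    have hj := congrFun (hjump t ht.1 ht.2) w
    rw [hj, sub_self] at hkey
    have hDt : D t = LZ - LY := by
      have : Z t w - taLeftLim Z t w - (Y t w - taLeftLim Y t w) = 0 := hkey.symm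
      rw [hD]
      simp only []
      rw [hZl, hYl] at this
      linarith
    rw [hDt]
    exact hLZ.sub hLY
  -- continuity of D on [0, T]
  have hcont : ContinuousOn D (Set.Icc 0 T) := by
    intro t ht
    have hsub : Set.Icc (0:ℝ) T ⊆ (Set.Icc 0 T ∩ Set.Iio t) ∪ (Set.Icc 0 T ∩ Set.Ici t) := by
      intro x hx
      rcases lt_or_ge x t with h | h
      · exact Or.inl ⟨hx, h⟩
      · exact Or.inr ⟨hx, h⟩
    have : Filter.Tendsto D (nhdsWithin t ((Set.Icc 0 T ∩ Set.Iio t) ∪ (Set.Icc 0 T ∩ Set.Ici t)))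
        (nhds (D t)) := by
      rw [nhdsWithin_union, Filter.tendsto_sup]
      constructor
      · rcases eq_or_lt_of_le ht.1 with h0 | h0
        · have hemp : Set.Icc (0:ℝ) T ∩ Set.Iio t = ∅ := by
            ext x
            simp only [Set.mem_inter_iff, Set.mem_Icc, Set.mem_Iio, Set.mem_empty_iff_false,
              iff_false, not_and]
            intro hx1
            rw [← h0]
            intro h
            linarith [hx1.1]
          rw [hemp, nhdsWithin_empty]
          exact Filter.tendsto_bot
        · exact (hleft t ⟨h0, ht.2⟩).mono_left
            (nhdsWithin_mono t Set.inter_subset_right)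
      · rcases eq_or_lt_of_le ht.2 with hT' | hT'
        · have hsing : Set.Icc (0:ℝ) T ∩ Set.Ici t ⊆ {t} := by
            intro x hx
            have h1 : x ≤ T := hx.1.2
            have h2 : t ≤ x := hx.2
            simp only [Set.mem_singleton_iff]
            have h3 : t = T := hT'
            linarith
          refine Filter.Tendsto.mono_left ?_ (nhdsWithin_mono t hsing)
          rw [nhdsWithin_singleton]
          exact tendsto_pure_nhds D t
        · have hr := ((hZc w).1 t ⟨ht.1, hT'⟩).sub ((hYc w).1 t ⟨ht.1, hT'⟩)
          exact hr.mono_left (nhdsWithin_mono t Set.inter_subset_right)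
    exact this.mono_left (nhdsWithin_mono t hsub)
  have hucont := (isCompact_Icc : IsCompact (Set.Icc (0:ℝ) T)).uniformContinuousOn_of_continuous
    hcont
  rw [Metric.uniformContinuousOn_iff] at hucont
  -- variation constants
  obtain ⟨MZ, hMZ⟩ := hZv
  obtain ⟨MY, hMY⟩ := hYv
  set q : ℝ := p / ((m : ℝ) + 1) with hq
  have hm1 : (0:ℝ) < (m:ℝ) + 1 := by positivity
  have hppos : 0 < p := lt_of_lt_of_le (by exact_mod_cast hm) hp1
  have hq0 : 0 < q := div_pos hppos hm1
  have hq1 : q < 1 := (div_lt_one hm1).mpr hp2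
  set M : ℝ := max (MZ + MY) 0 + 1 with hM
  have hM0 : 0 < M := by
    have : (0:ℝ) ≤ max (MZ + MY) 0 := le_max_right _ _
    linarith
  have hMle : MZ + MY ≤ M := by
    have : MZ + MY ≤ max (MZ + MY) 0 := le_max_left _ _
    linarith
  -- main estimate
  have habs : ∀ ε' : ℝ, 0 < ε' → |D t0| ≤ ε' := by
    intro ε' hε'
    set ε : ℝ := (ε' / M) ^ (1 / (1 - q)) with hε
    have hε0 : 0 < ε := Real.rpow_pos_of_pos (div_pos hε' hM0) _
    obtain ⟨δ, hδ0, hδ⟩ := hucont ε hε0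
    set K : ℕ := ⌈t0 / δ⌉₊ + 1 with hK
    have hKpos : 0 < (K : ℝ) := by positivity
    have hKgt : t0 / δ < (K : ℝ) := by
      have := Nat.le_ceil (t0 / δ)
      have h2 : ((⌈t0 / δ⌉₊ : ℝ)) < (K : ℝ) := by
        rw [hK]; push_cast; linarith
      linarith
    set c : ℝ := t0 / K with hc
    have hc0 : 0 < c := div_pos h0 hKpos
    have hcδ : c < δ := by
      rw [hc, div_lt_iff₀ hKpos]
      calc t0 = δ * (t0 / δ) := by field_simp
        _ < δ * K := mul_lt_mul_of_pos_left hKgt hδ0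
    set u : ℕ → ℝ := fun i => if i ≤ K then i * c else T with hu
    have huK : u K = t0 := by
      rw [hu]
      simp only [le_refl, if_pos]
      rw [hc]
      field_simp
    have hu0 : u 0 = 0 := by simp [hu]
    have huv : ∀ i, i ≤ K → u i = i * c := fun i hi => by simp [hu, hi]
    -- choice of K'
    obtain ⟨K', hKK', hstrict, huK'⟩ :
        ∃ K', K ≤ K' ∧ (∀ i, i < K' → u i < u (i+1)) ∧ u K' = T := by
      rcases eq_or_lt_of_le ht0.2 with he | hlt
      · refine ⟨K, le_rfl, ?_, by rw [huK, he]⟩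
        intro i hi
        rw [huv i (by omega), huv (i+1) (by omega)]
        have : (i:ℝ) < (i:ℝ) + 1 := by linarith
        calc (i:ℝ) * c < ((i:ℝ)+1) * c := by nlinarith
          _ = ((i+1 : ℕ) : ℝ) * c := by push_cast; ring
      · refine ⟨K + 1, by omega, ?_, by simp [hu]⟩
        intro i hi
        rcases Nat.lt_or_ge i K with h | h
        · rw [huv i (by omega), huv (i+1) (by omega)]
          have : ((i+1:ℕ):ℝ) = (i:ℝ) + 1 := by push_cast; ring
          rw [this]
          nlinarith
        · have hiK : i = K := by omega
          subst hiK
          rw [huK]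
          have : ¬ (K + 1 ≤ K) := by omega
          rw [hu]
          simp only [this, if_false]
          exact hlt
    have hpart : IsPartition 0 T ((Finset.range (K'+1)).image u) := by
      have := AuxMJE.isPartition_image u K' hstrict
      rwa [hu0, huK'] at this
    -- variation sums
    have hsumZ : ∑ i ∈ Finset.range K',
        taHomNorm (m + 1) (taMul (m + 1) (taInv (m + 1) (Z (u i))) (Z (u (i+1)))) ^ p ≤ MZ := by
      have h1 := AuxMJE.sum_partition u K' hstrict
        (fun a b => taHomNorm (m + 1) (taMul (m + 1) (taInv (m + 1) (Z a)) (Z b)) ^ p)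
      rw [huK'] at h1
      rw [← h1]
      exact hMZ _ hpart
    have hsumY : ∑ i ∈ Finset.range K',
        taHomNorm (m + 1) (taMul (m + 1) (taInv (m + 1) (Y (u i))) (Y (u (i+1)))) ^ p ≤ MY := by
      have h1 := AuxMJE.sum_partition u K' hstrict
        (fun a b => taHomNorm (m + 1) (taMul (m + 1) (taInv (m + 1) (Y a)) (Y b)) ^ p)
      rw [huK'] at h1
      rw [← h1]
      exact hMY _ hpart
    -- telescoping
    have htel : D t0 = ∑ i ∈ Finset.range K, (D (u (i+1)) - D (u i)) := by
      rw [Finset.sum_range_sub (fun i => D (u i)) K, huK, hu0, hD0, sub_zero]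
    -- increment bounds
    have hmem : ∀ i, i ≤ K → u i ∈ Set.Icc (0:ℝ) T := by
      intro i hi
      rw [huv i hi]
      constructor
      · positivity
      · have h1 : (i:ℝ) * c ≤ (K:ℝ) * c := by
          have : (i:ℝ) ≤ (K:ℝ) := by exact_mod_cast hi
          nlinarith
        have h2 : (K:ℝ) * c = t0 := by rw [hc]; field_simp
        linarith [ht0.2]
    have hsmall : ∀ i, i < K → |D (u (i+1)) - D (u i)| ≤ ε := by
      intro i hi
      have h1 := hδ (u (i+1)) (hmem (i+1) (by omega)) (u i) (hmem i (by omega)) ?_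
      · rw [Real.dist_eq] at h1
        exact le_of_lt h1
      · rw [Real.dist_eq, huv (i+1) (by omega), huv i (by omega)]
        have : ((i+1:ℕ):ℝ) * c - (i:ℝ) * c = c := by push_cast; ring
        rw [this, abs_of_pos hc0]
        exact hcδ
    have hkeybd : ∀ i, i < K → |D (u (i+1)) - D (u i)| ≤
        taHomNorm (m + 1) (taMul (m + 1) (taInv (m + 1) (Z (u i))) (Z (u (i+1)))) ^ ((m:ℝ)+1)
        + taHomNorm (m + 1) (taMul (m + 1) (taInv (m + 1) (Y (u i))) (Y (u (i+1)))) ^ ((m:ℝ)+1) := by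
      intro i hi
      have hkey := AuxMJE.keyIncrement (m := m) (Z (u i)) (Y (u i)) (Z (u (i+1))) (Y (u (i+1)))
        (hZ1 _) (hY1 _) (hZ1 _) (hY1 _) (fun v hv => hproj _ v hv) (fun v hv => hproj _ v hv)
        w hwlen
      have heq : D (u (i+1)) - D (u i)
          = taMul (m+1) (taInv (m+1) (Z (u i))) (Z (u (i+1))) w
            - taMul (m+1) (taInv (m+1) (Y (u i))) (Y (u (i+1))) w := by
        rw [hkey, hD]; ring
      rw [heq]
      calc |taMul (m+1) (taInv (m+1) (Z (u i))) (Z (u (i+1))) w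
            - taMul (m+1) (taInv (m+1) (Y (u i))) (Y (u (i+1))) w|
          ≤ |taMul (m+1) (taInv (m+1) (Z (u i))) (Z (u (i+1))) w|
            + |taMul (m+1) (taInv (m+1) (Y (u i))) (Y (u (i+1))) w| := abs_sub _ _
        _ ≤ _ := add_le_add
            (AuxMJE.abs_le_homNorm_pow _ w hwlen) (AuxMJE.abs_le_homNorm_pow _ w hwlen)
    -- power estimate per increment
    have hperq : ∀ i, i < K → |D (u (i+1)) - D (u i)| ^ q ≤
        taHomNorm (m + 1) (taMul (m + 1) (taInv (m + 1) (Z (u i))) (Z (u (i+1)))) ^ p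
        + taHomNorm (m + 1) (taMul (m + 1) (taInv (m + 1) (Y (u i))) (Y (u (i+1)))) ^ p := by
      intro i hi
      set HZ := taHomNorm (m + 1) (taMul (m + 1) (taInv (m + 1) (Z (u i))) (Z (u (i+1)))) with hHZ
      set HY := taHomNorm (m + 1) (taMul (m + 1) (taInv (m + 1) (Y (u i))) (Y (u (i+1)))) with hHY
      have hHZ0 : 0 ≤ HZ := AuxMJE.homNorm_nonneg _
      have hHY0 : 0 ≤ HY := AuxMJE.homNorm_nonneg _
      calc |D (u (i+1)) - D (u i)| ^ q
          ≤ (HZ ^ ((m:ℝ)+1) + HY ^ ((m:ℝ)+1)) ^ q :=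
            Real.rpow_le_rpow (abs_nonneg _) (hkeybd i hi) (le_of_lt hq0)
        _ ≤ (HZ ^ ((m:ℝ)+1)) ^ q + (HY ^ ((m:ℝ)+1)) ^ q :=
            AuxMJE.rpow_subadd (Real.rpow_nonneg hHZ0 _) (Real.rpow_nonneg hHY0 _)
              hq0 (le_of_lt hq1)
        _ = HZ ^ p + HY ^ p := by
            rw [← Real.rpow_mul hHZ0, ← Real.rpow_mul hHY0]
            have : ((m:ℝ)+1) * q = p := by
              rw [hq]; field_simp
            rw [this]
    -- combine
    have hchain : |D t0| ≤ ε ^ (1 - q) * M := by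
      rw [htel]
      calc |∑ i ∈ Finset.range K, (D (u (i+1)) - D (u i))|
          ≤ ∑ i ∈ Finset.range K, |D (u (i+1)) - D (u i)| :=
            Finset.abs_sum_le_sum_abs _ _
        _ ≤ ∑ i ∈ Finset.range K, ε ^ (1 - q) * |D (u (i+1)) - D (u i)| ^ q := by
            refine Finset.sum_le_sum fun i hi => ?_
            have hi' := Finset.mem_range.mp hi
            have habs0 : 0 ≤ |D (u (i+1)) - D (u i)| := abs_nonneg _
            have e1 : |D (u (i+1)) - D (u i)|
                = |D (u (i+1)) - D (u i)| ^ q * |D (u (i+1)) - D (u i)| ^ (1 - q) := by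
              rw [← Real.rpow_add' habs0 (by norm_num : q + (1 - q) ≠ 0)]
              norm_num
            calc |D (u (i+1)) - D (u i)|
                = |D (u (i+1)) - D (u i)| ^ q * |D (u (i+1)) - D (u i)| ^ (1 - q) := e1
              _ ≤ |D (u (i+1)) - D (u i)| ^ q * ε ^ (1 - q) :=
                  mul_le_mul_of_nonneg_left
                    (Real.rpow_le_rpow habs0 (hsmall i hi') (by linarith))
                    (Real.rpow_nonneg habs0 _)
              _ = ε ^ (1 - q) * |D (u (i+1)) - D (u i)| ^ q := mul_comm _ _
        _ = ε ^ (1 - q) * ∑ i ∈ Finset.range K, |D (u (i+1)) - D (u i)| ^ q := by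
            rw [Finset.mul_sum]
        _ ≤ ε ^ (1 - q) * M := by
            refine mul_le_mul_of_nonneg_left ?_ (Real.rpow_nonneg (le_of_lt hε0) _)
            calc ∑ i ∈ Finset.range K, |D (u (i+1)) - D (u i)| ^ q
                ≤ ∑ i ∈ Finset.range K,
                  (taHomNorm (m + 1) (taMul (m + 1) (taInv (m + 1) (Z (u i))) (Z (u (i+1)))) ^ p
                  + taHomNorm (m + 1) (taMul (m + 1) (taInv (m + 1) (Y (u i))) (Y (u (i+1)))) ^ p) :=
                  Finset.sum_le_sum fun i hi => hperq i (Finset.mem_range.mp hi)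
              _ = (∑ i ∈ Finset.range K,
                    taHomNorm (m + 1) (taMul (m + 1) (taInv (m + 1) (Z (u i))) (Z (u (i+1)))) ^ p)
                  + ∑ i ∈ Finset.range K,
                    taHomNorm (m + 1) (taMul (m + 1) (taInv (m + 1) (Y (u i))) (Y (u (i+1)))) ^ p :=
                  Finset.sum_add_distrib
              _ ≤ MZ + MY := by
                  refine add_le_add (le_trans ?_ hsumZ) (le_trans ?_ hsumY)
                  · refine Finset.sum_le_sum_of_subset_of_nonneg
                      (Finset.range_subset_range.mpr hKK') fun i _ _ =>
                      Real.rpow_nonneg (AuxMJE.homNorm_nonneg _) _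
                  · refine Finset.sum_le_sum_of_subset_of_nonneg
                      (Finset.range_subset_range.mpr hKK') fun i _ _ =>
                      Real.rpow_nonneg (AuxMJE.homNorm_nonneg _) _
              _ ≤ M := hMle
    have hεpow : ε ^ (1 - q) = ε' / M := by
      rw [hε, ← Real.rpow_mul (le_of_lt (div_pos hε' hM0)), one_div,
        inv_mul_cancel₀ (by linarith : (1:ℝ) - q ≠ 0), Real.rpow_one]
    rw [hεpow] at hchain
    calc |D t0| ≤ ε' / M * M := hchain
      _ = ε' := by field_simp
  -- conclude
  have hle : |D t0| ≤ 0 := by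
    by_contra hcon
    push_neg at hcon
    have := habs (|D t0| / 2) (by linarith)
    linarith
  exact abs_nonpos_iff.mp hle
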